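/- Let ū ≥ 1, s = 1/4 + 1/(2p) with 1 < p ≤ 2, and let φ : [ū, ∞) → ℝ be C¹ with φ(ū) = 0 and φ(u) → 0 as u → ∞, with M² := ∫_ū^∞ u^{3s}(u-ū)^s φ'(u)² du < ∞. Then for all u ≥ ū: u^{2/p} φ(u)² ≤ C·M² for an absolute constant C. -/

import Mathlib

open MeasureTheory Set Filter

-- tail bound
lemma tailA {s ub c : ℝ} (hub : 1 ≤ ub) (hs1 : 1/2 ≤ s) (hs2 : s ≤ 3/4) (hc : 2*ub ≤ c) :
    IntegrableOn (fun v => v ^ (-(3*s)) * (v - ub) ^ (-s)) (Ioi c) volume ∧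
    ∫ v in Ioi c, v ^ (-(3*s)) * (v - ub) ^ (-s) ≤ 2 * c ^ (1 - 4*s) := by
  have hc0 : (0:ℝ) < c := by linarith
  have hexp : -(4*s) < -1 := by linarith
  have hkey : ∀ v ∈ Ioi c, v ^ (-(3*s)) * (v - ub) ^ (-s) ≤ 2 * v ^ (-(4*s)) := by
    intro v hv
    have hv0 : (0:ℝ) < v := hc0.trans hv
    have hvc : c < v := hv
    have h1 : (v - ub) ^ (-s) ≤ (v/2) ^ (-s) := by
      apply Real.rpow_le_rpow_of_nonpos (by linarith) (by linarith) (by linarith)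
    have h2 : (v/2) ^ (-s) = v ^ (-s) * 2 ^ s := by
      rw [Real.div_rpow hv0.le (by norm_num), Real.rpow_neg (by norm_num : (0:ℝ) ≤ 2)]
      field_simp
    have h3 : (2:ℝ) ^ s ≤ 2 := by
      calc (2:ℝ) ^ s ≤ 2 ^ (1:ℝ) := Real.rpow_le_rpow_of_exponent_le one_le_two (by linarith)
      _ = 2 := Real.rpow_one 2
    have h4 : v ^ (-(3*s)) * v ^ (-s) = v ^ (-(4*s)) := by
      rw [← Real.rpow_add hv0]; ring_nf
    calc v ^ (-(3*s)) * (v - ub) ^ (-s) ≤ v ^ (-(3*s)) * (v ^ (-s) * 2 ^ s) := by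
          apply mul_le_mul_of_nonneg_left (h1.trans h2.le) (Real.rpow_nonneg hv0.le _)
      _ ≤ v ^ (-(3*s)) * (v ^ (-s) * 2) := by
          apply mul_le_mul_of_nonneg_left _ (Real.rpow_nonneg hv0.le _)
          exact mul_le_mul_of_nonneg_left h3 (Real.rpow_nonneg hv0.le _)
      _ = 2 * v ^ (-(4*s)) := by rw [← mul_assoc, h4]; ring
  have hcont : ContinuousOn (fun v : ℝ => v ^ (-(3*s)) * (v - ub) ^ (-s)) (Ioi c) := by
    intro v hv
    have hv0 : (0:ℝ) < v := hc0.trans hv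
    have hvb : (0:ℝ) < v - ub := by have := mem_Ioi.1 hv; linarith
    apply ContinuousWithinAt.mul
    · exact (Real.continuousAt_rpow_const v _ (Or.inl hv0.ne')).continuousWithinAt
    · exact (((continuousAt_id.sub continuousAt_const).rpow_const
        (Or.inl hvb.ne'))).continuousWithinAt
  have hmeas : AEStronglyMeasurable (fun v : ℝ => v ^ (-(3*s)) * (v - ub) ^ (-s))
      (volume.restrict (Ioi c)) :=
    (hcont.aemeasurable measurableSet_Ioi).aestronglyMeasurable
  have hnonneg : ∀ v ∈ Ioi c, 0 ≤ v ^ (-(3*s)) * (v - ub) ^ (-s) := by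
    intro v hv
    have hv0 : (0:ℝ) < v := hc0.trans hv
    have hvb : (0:ℝ) ≤ v - ub := by have := mem_Ioi.1 hv; linarith
    exact mul_nonneg (Real.rpow_nonneg hv0.le _) (Real.rpow_nonneg hvb _)
  have hgint : IntegrableOn (fun v : ℝ => 2 * v ^ (-(4*s))) (Ioi c) volume :=
    (integrableOn_Ioi_rpow_of_lt hexp hc0).const_mul 2
  have hint : IntegrableOn (fun v => v ^ (-(3*s)) * (v - ub) ^ (-s)) (Ioi c) volume := by
    apply Integrable.mono' hgint hmeas
    filter_upwards [ae_restrict_mem measurableSet_Ioi] with v hv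
    rw [Real.norm_of_nonneg (hnonneg v hv)]
    exact hkey v hv
  refine ⟨hint, ?_⟩
  calc ∫ v in Ioi c, v ^ (-(3*s)) * (v - ub) ^ (-s) ≤ ∫ v in Ioi c, 2 * v ^ (-(4*s)) :=
        setIntegral_mono_on hint hgint measurableSet_Ioi hkey
    _ = 2 * ∫ v in Ioi c, v ^ (-(4*s)) := by rw [integral_const_mul]
    _ = 2 * (-c ^ (-(4*s) + 1) / (-(4*s) + 1)) := by rw [integral_Ioi_rpow_of_lt hexp hc0]
    _ = 2 * (c ^ (1 - 4*s) / (4*s - 1)) := by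
        rw [show -(4*s) + 1 = 1 - 4*s by ring]
        congr 1
        rw [div_eq_div_iff (by linarith) (by linarith)]
        ring
    _ ≤ 2 * c ^ (1 - 4*s) := by
        have h5 : (0:ℝ) ≤ c ^ (1 - 4*s) := (Real.rpow_pos_of_pos hc0 _).le
        have h7 : (1:ℝ) ≤ 4*s - 1 := by linarith
        exact mul_le_mul_of_nonneg_left (div_le_self h5 h7) (by norm_num)

lemma nearB {s ub : ℝ} (hub : 1 ≤ ub) (hs1 : 1/2 ≤ s) (hs2 : s ≤ 3/4) :
    IntegrableOn (fun v => v ^ (-(3*s)) * (v - ub) ^ (-s)) (Ioc ub (2*ub)) volume ∧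
    ∫ v in Ioc ub (2*ub), v ^ (-(3*s)) * (v - ub) ^ (-s) ≤ 4 * ub ^ (1 - 4*s) := by
  have hub0 : (0:ℝ) < ub := by linarith
  have hle : ub ≤ 2*ub := by linarith
  have hsexp : (-1:ℝ) < -s := by linarith
  -- integrability of (v-ub)^(-s) on Ioc ub (2ub)
  have hII : IntervalIntegrable (fun v : ℝ => (v - ub) ^ (-s)) volume ub (2*ub) := by
    have h := (intervalIntegral.intervalIntegrable_rpow' hsexp (a := 0) (b := ub)).comp_sub_right ub
    rw [zero_add, show ub + ub = 2*ub by ring] at h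
    exact h
  have hIoc : IntegrableOn (fun v : ℝ => (v - ub) ^ (-s)) (Ioc ub (2*ub)) volume :=
    (intervalIntegrable_iff_integrableOn_Ioc_of_le hle).mp hII
  -- value of that integral
  have hval : ∫ v in Ioc ub (2*ub), (v - ub) ^ (-s) = ub ^ (1 - s) / (1 - s) := by
    rw [← intervalIntegral.integral_of_le hle]
    rw [intervalIntegral.integral_comp_sub_right (fun x => x ^ (-s)) ub]
    rw [show ub - ub = (0:ℝ) by ring, show 2*ub - ub = ub by ring]
    rw [integral_rpow (Or.inl hsexp)]
    rw [Real.zero_rpow (by intro h; linarith : -s + 1 ≠ 0)]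
    rw [show -s + 1 = 1 - s by ring]
    ring
  have hgint : IntegrableOn (fun v : ℝ => ub ^ (-(3*s)) * (v - ub) ^ (-s)) (Ioc ub (2*ub)) volume :=
    hIoc.const_mul _
  have hkey : ∀ v ∈ Ioc ub (2*ub), v ^ (-(3*s)) * (v - ub) ^ (-s) ≤
      ub ^ (-(3*s)) * (v - ub) ^ (-s) := by
    intro v hv
    have h1 : v ^ (-(3*s)) ≤ ub ^ (-(3*s)) :=
      Real.rpow_le_rpow_of_nonpos hub0 hv.1.le (by linarith)
    exact mul_le_mul_of_nonneg_right h1 (Real.rpow_nonneg (by linarith [hv.1] : (0:ℝ) ≤ v - ub) _)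
  have hnonneg : ∀ v ∈ Ioc ub (2*ub), 0 ≤ v ^ (-(3*s)) * (v - ub) ^ (-s) := by
    intro v hv
    exact mul_nonneg (Real.rpow_nonneg (by linarith [hv.1] : (0:ℝ) ≤ v) _)
      (Real.rpow_nonneg (by linarith [hv.1] : (0:ℝ) ≤ v - ub) _)
  have hcont : ContinuousOn (fun v : ℝ => v ^ (-(3*s)) * (v - ub) ^ (-s)) (Ioc ub (2*ub)) := by
    intro v hv
    have hv0 : (0:ℝ) < v := hub0.trans hv.1
    have hvb : (0:ℝ) < v - ub := by linarith [hv.1]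
    apply ContinuousWithinAt.mul
    · exact (Real.continuousAt_rpow_const v _ (Or.inl hv0.ne')).continuousWithinAt
    · exact (((continuousAt_id.sub continuousAt_const).rpow_const
        (Or.inl hvb.ne'))).continuousWithinAt
  have hmeas : AEStronglyMeasurable (fun v : ℝ => v ^ (-(3*s)) * (v - ub) ^ (-s))
      (volume.restrict (Ioc ub (2*ub))) :=
    (hcont.aemeasurable measurableSet_Ioc).aestronglyMeasurable
  have hint : IntegrableOn (fun v => v ^ (-(3*s)) * (v - ub) ^ (-s)) (Ioc ub (2*ub)) volume := by
    apply Integrable.mono' hgint hmeas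
    filter_upwards [ae_restrict_mem measurableSet_Ioc] with v hv
    rw [Real.norm_of_nonneg (hnonneg v hv)]
    exact hkey v hv
  refine ⟨hint, ?_⟩
  calc ∫ v in Ioc ub (2*ub), v ^ (-(3*s)) * (v - ub) ^ (-s)
      ≤ ∫ v in Ioc ub (2*ub), ub ^ (-(3*s)) * (v - ub) ^ (-s) :=
        setIntegral_mono_on hint hgint measurableSet_Ioc hkey
    _ = ub ^ (-(3*s)) * (ub ^ (1 - s) / (1 - s)) := by rw [integral_const_mul, hval]
    _ ≤ ub ^ (-(3*s)) * (4 * ub ^ (1 - s)) := by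
        apply mul_le_mul_of_nonneg_left _ (Real.rpow_nonneg hub0.le _)
        rw [div_le_iff₀ (by linarith : (0:ℝ) < 1 - s)]
        have : (0:ℝ) ≤ ub ^ (1 - s) := Real.rpow_nonneg hub0.le _
        nlinarith
    _ = 4 * ub ^ (1 - 4*s) := by
        rw [mul_comm (ub ^ (-(3*s))), mul_assoc, ← Real.rpow_add hub0]
        ring_nf

lemma weightIoi {s ub : ℝ} (hub : 1 ≤ ub) (hs1 : 1/2 ≤ s) (hs2 : s ≤ 3/4) :
    IntegrableOn (fun v => v ^ (-(3*s)) * (v - ub) ^ (-s)) (Ioi ub) volume ∧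
    ∫ v in Ioi ub, v ^ (-(3*s)) * (v - ub) ^ (-s) ≤ 6 * ub ^ (1 - 4*s) := by
  have hub0 : (0:ℝ) < ub := by linarith
  have hle : ub ≤ 2*ub := by linarith
  obtain ⟨hA, hAv⟩ := tailA hub hs1 hs2 (le_refl (2*ub))
  obtain ⟨hB, hBv⟩ := nearB hub hs1 hs2
  have hun : Ioc ub (2*ub) ∪ Ioi (2*ub) = Ioi ub := Ioc_union_Ioi_eq_Ioi hle
  have hint : IntegrableOn (fun v => v ^ (-(3*s)) * (v - ub) ^ (-s)) (Ioi ub) volume := by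
    rw [← hun]; exact hB.union hA
  refine ⟨hint, ?_⟩
  have hsplit : ∫ v in Ioi ub, v ^ (-(3*s)) * (v - ub) ^ (-s) =
      (∫ v in Ioc ub (2*ub), v ^ (-(3*s)) * (v - ub) ^ (-s)) +
      ∫ v in Ioi (2*ub), v ^ (-(3*s)) * (v - ub) ^ (-s) := by
    rw [← hun]
    exact setIntegral_union (Ioc_disjoint_Ioi le_rfl) measurableSet_Ioi hB hA
  have h2 : (2*ub) ^ (1 - 4*s) ≤ ub ^ (1 - 4*s) := by
    rw [Real.mul_rpow (by norm_num) hub0.le]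
    have : (2:ℝ) ^ (1 - 4*s) ≤ 1 :=
      Real.rpow_le_one_of_one_le_of_nonpos one_le_two (by linarith)
    nlinarith [Real.rpow_nonneg hub0.le (1 - 4*s)]
  rw [hsplit]
  have := mul_le_mul_of_nonneg_left h2 (by norm_num : (0:ℝ) ≤ 2)
  linarith

lemma weightMain {s ub u : ℝ} (hub : 1 ≤ ub) (hs1 : 1/2 ≤ s) (hs2 : s ≤ 3/4) (hu : ub ≤ u) :
    IntegrableOn (fun v => v ^ (-(3*s)) * (v - ub) ^ (-s)) (Ioi u) volume ∧
    ∫ v in Ioi u, v ^ (-(3*s)) * (v - ub) ^ (-s) ≤ 24 * u ^ (1 - 4*s) := by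
  have hub0 : (0:ℝ) < ub := by linarith
  have hu0 : (0:ℝ) < u := by linarith
  obtain ⟨hIub, hVub⟩ := weightIoi hub hs1 hs2
  have hint : IntegrableOn (fun v => v ^ (-(3*s)) * (v - ub) ^ (-s)) (Ioi u) volume :=
    hIub.mono_set (Ioi_subset_Ioi hu)
  refine ⟨hint, ?_⟩
  rcases le_or_gt (2*ub) u with hc | hc
  · obtain ⟨_, hAv⟩ := tailA hub hs1 hs2 hc
    have : (0:ℝ) ≤ u ^ (1 - 4*s) := Real.rpow_nonneg hu0.le _
    linarith
  · have hmono : ∫ v in Ioi u, v ^ (-(3*s)) * (v - ub) ^ (-s) ≤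
        ∫ v in Ioi ub, v ^ (-(3*s)) * (v - ub) ^ (-s) := by
      apply setIntegral_mono_set hIub
      · filter_upwards [ae_restrict_mem measurableSet_Ioi] with v hv
        have hv1 : ub < v := hv
        exact mul_nonneg (Real.rpow_nonneg (by linarith) _)
          (Real.rpow_nonneg (by linarith) _)
      · exact HasSubset.Subset.eventuallyLE (Ioi_subset_Ioi hu)
    have hq : ub ^ (1 - 4*s) ≤ 4 * u ^ (1 - 4*s) := by
      have h1 : u ^ (1 - 4*s) ≥ (2*ub) ^ (1 - 4*s) :=
        Real.rpow_le_rpow_of_nonpos hu0 hc.le (by linarith)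
      have h2 : (2*ub) ^ (1 - 4*s) = 2 ^ (1 - 4*s) * ub ^ (1 - 4*s) :=
        Real.mul_rpow (by norm_num) hub0.le
      have h3 : (2:ℝ) ^ (-2:ℝ) ≤ 2 ^ (1 - 4*s) :=
        Real.rpow_le_rpow_of_exponent_le one_le_two (by linarith)
      have h4 : (2:ℝ) ^ (-2:ℝ) = 1/4 := by
        rw [show (-2:ℝ) = ((-2:ℤ):ℝ) by norm_num, Real.rpow_intCast]
        norm_num
      have h5 : (1/4:ℝ) * ub ^ (1-4*s) ≤ 2 ^ (1-4*s) * ub ^ (1-4*s) :=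
        mul_le_mul_of_nonneg_right (h4 ▸ h3) (Real.rpow_nonneg hub0.le _)
      linarith
    linarith

lemma mycs {μ : Measure ℝ} {f g : ℝ → ℝ} (hf : 0 ≤ᵐ[μ] f) (hg : 0 ≤ᵐ[μ] g)
    (hfm : AEStronglyMeasurable f μ) (hgm : AEStronglyMeasurable g μ)
    (hf2 : Integrable (fun x => f x ^ 2) μ) (hg2 : Integrable (fun x => g x ^ 2) μ) :
    (∫ x, f x * g x ∂μ) ^ 2 ≤ (∫ x, f x ^ 2 ∂μ) * ∫ x, g x ^ 2 ∂μ := by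
  have h2 : ENNReal.ofReal (2:ℝ) = 2 := by
    rw [ENNReal.ofReal_ofNat]
  have hmf : MemLp f (ENNReal.ofReal 2) μ := by
    rw [h2]; exact (memLp_two_iff_integrable_sq hfm).2 hf2
  have hmg : MemLp g (ENNReal.ofReal 2) μ := by
    rw [h2]; exact (memLp_two_iff_integrable_sq hgm).2 hg2
  have hpq : Real.HolderConjugate 2 2 := Real.HolderConjugate.two_two
  have H := integral_mul_le_Lp_mul_Lq_of_nonneg hpq hf hg hmf hmg
  have hrw : ∀ h : ℝ → ℝ, (∫ x, h x ^ (2:ℝ) ∂μ) = ∫ x, h x ^ 2 ∂μ := by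
    intro h
    congr 1
    ext x
    rw [show (2:ℝ) = ((2:ℕ):ℝ) by norm_num, Real.rpow_natCast]
  rw [hrw f, hrw g] at H
  set A := ∫ x, f x ^ 2 ∂μ with hA
  set B := ∫ x, g x ^ 2 ∂μ with hB
  have hA0 : 0 ≤ A := integral_nonneg (fun x => sq_nonneg _)
  have hB0 : 0 ≤ B := integral_nonneg (fun x => sq_nonneg _)
  have hI0 : 0 ≤ ∫ x, f x * g x ∂μ := by
    apply integral_nonneg_of_ae
    filter_upwards [hf, hg] with x h1 h2
    exact mul_nonneg h1 h2
  have hsq : (A ^ ((1:ℝ)/2) * B ^ ((1:ℝ)/2)) ^ 2 = A * B := by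
    rw [mul_pow, ← Real.rpow_natCast (A ^ ((1:ℝ)/2)) 2, ← Real.rpow_natCast (B ^ ((1:ℝ)/2)) 2,
      ← Real.rpow_mul hA0, ← Real.rpow_mul hB0]
    norm_num
  calc (∫ x, f x * g x ∂μ) ^ 2 ≤ (A ^ ((1:ℝ)/2) * B ^ ((1:ℝ)/2)) ^ 2 := by
        apply pow_le_pow_left₀ hI0 H
    _ = A * B := hsq

lemma myrep {φ : ℝ → ℝ} (hφ : ContDiff ℝ 1 φ) (ht : Tendsto φ atTop (nhds 0)) {u : ℝ}
    (hi : IntegrableOn (deriv φ) (Ioi u) volume) : φ u = - ∫ v in Ioi u, deriv φ v := by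
  have h1 : Tendsto (fun X => ∫ v in u..X, deriv φ v) atTop
      (nhds (∫ v in Ioi u, deriv φ v)) :=
    intervalIntegral_tendsto_integral_Ioi u hi tendsto_id
  have h2 : ∀ X : ℝ, ∫ v in u..X, deriv φ v = φ X - φ u := fun X =>
    intervalIntegral.integral_deriv_eq_sub (fun x _ => (hφ.differentiable one_ne_zero).differentiableAt)
      ((hφ.continuous_deriv le_rfl).intervalIntegrable u X)
  have h1' : Tendsto (fun X => φ X - φ u) atTop (nhds (∫ v in Ioi u, deriv φ v)) := by
    apply h1.congr; intro X; exact h2 X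
  have h3 : Tendsto (fun X => φ X - φ u) atTop (nhds (0 - φ u)) := ht.sub_const _
  have := tendsto_nhds_unique h1' h3
  rw [this]; ring

theorem stmt_9 :
    ∃ C > (0 : ℝ), ∀ (ub p : ℝ) (φ : ℝ → ℝ),
      1 ≤ ub → 1 < p → p ≤ 2 →
      ContDiff ℝ 1 φ → φ ub = 0 → Tendsto φ atTop (nhds 0) →
      IntegrableOn
        (fun u => u ^ (3 * (1 / 4 + 1 / (2 * p))) * (u - ub) ^ (1 / 4 + 1 / (2 * p)) *
          (deriv φ u) ^ 2) (Ioi ub) →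
      ∀ u, ub ≤ u →
        u ^ (2 / p) * (φ u) ^ 2 ≤
          C * ∫ v in Ioi ub, v ^ (3 * (1 / 4 + 1 / (2 * p))) *
            (v - ub) ^ (1 / 4 + 1 / (2 * p)) * (deriv φ v) ^ 2 := by
  refine ⟨24, by norm_num, ?_⟩
  intro ub p φ hub hp1 hp2 hφ hφub ht hInt u hu
  have hp0 : (0:ℝ) < p := by linarith
  have h2p : (0:ℝ) < 2*p := by linarith
  set s : ℝ := 1/4 + 1/(2*p) with hs
  have hs1 : 1/2 ≤ s := by
    have : (1:ℝ)/4 ≤ 1/(2*p) := by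
      rw [div_le_div_iff₀ (by norm_num) h2p]; linarith
    rw [hs]; linarith
  have hs2 : s ≤ 3/4 := by
    have : (1:ℝ)/(2*p) ≤ 1/2 := by
      rw [div_le_div_iff₀ h2p (by norm_num)]; linarith
    rw [hs]; linarith
  have hu0 : (0:ℝ) < u := by linarith
  obtain ⟨hWint, hWval⟩ := weightMain hub hs1 hs2 hu
  set M2 : ℝ := ∫ v in Ioi ub, v ^ (3*s) * (v - ub) ^ s * (deriv φ v) ^ 2 with hM2
  set f : ℝ → ℝ := fun v => v ^ (-(3*s)/2) * (v - ub) ^ (-s/2) with hfdef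
  set g : ℝ → ℝ := fun v => v ^ (3*s/2) * (v - ub) ^ (s/2) * |deriv φ v| with hgdef
  set μ : Measure ℝ := volume.restrict (Ioi u) with hμ
  -- pointwise facts on Ioi u
  have hfg : ∀ v ∈ Ioi u, f v * g v = |deriv φ v| := by
    intro v hv
    have hv0 : (0:ℝ) < v := hu0.trans hv
    have hvb : (0:ℝ) < v - ub := by have : u < v := hv; linarith
    have e1 : v ^ (-(3*s)/2) * v ^ (3*s/2) = 1 := by
      rw [← Real.rpow_add hv0, show -(3*s)/2 + 3*s/2 = 0 by ring, Real.rpow_zero]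
    have e2 : (v - ub) ^ (-s/2) * (v - ub) ^ (s/2) = 1 := by
      rw [← Real.rpow_add hvb, show -s/2 + s/2 = 0 by ring, Real.rpow_zero]
    calc f v * g v
        = (v ^ (-(3*s)/2) * v ^ (3*s/2)) * ((v - ub) ^ (-s/2) * (v - ub) ^ (s/2)) *
          |deriv φ v| := by rw [hfdef, hgdef]; ring
      _ = |deriv φ v| := by rw [e1, e2]; ring
  have hf2eq : ∀ v ∈ Ioi u, f v ^ 2 = v ^ (-(3*s)) * (v - ub) ^ (-s) := by
    intro v hv
    have hv0 : (0:ℝ) < v := hu0.trans hv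
    have hvb : (0:ℝ) < v - ub := by have : u < v := hv; linarith
    rw [hfdef]
    simp only []
    rw [mul_pow, pow_two, pow_two, ← Real.rpow_add hv0, ← Real.rpow_add hvb,
      show -(3*s)/2 + -(3*s)/2 = -(3*s) by ring, show -s/2 + -s/2 = -s by ring]
  have hg2eq : ∀ v ∈ Ioi u, g v ^ 2 = v ^ (3*s) * (v - ub) ^ s * (deriv φ v) ^ 2 := by
    intro v hv
    have hv0 : (0:ℝ) < v := hu0.trans hv
    have hvb : (0:ℝ) < v - ub := by have : u < v := hv; linarith
    rw [hgdef]
    simp only []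
    rw [mul_pow, mul_pow, pow_two (v ^ (3*s/2)), pow_two ((v - ub) ^ (s/2)),
      ← Real.rpow_add hv0, ← Real.rpow_add hvb, sq_abs,
      show 3*s/2 + 3*s/2 = 3*s by ring, show s/2 + s/2 = s by ring]
  -- measurability
  have hfm : AEStronglyMeasurable f μ := by
    have hcont : ContinuousOn f (Ioi u) := by
      intro v hv
      have hv0 : (0:ℝ) < v := hu0.trans hv
      have hvb : (0:ℝ) < v - ub := by have : u < v := hv; linarith
      exact ((Real.continuousAt_rpow_const v _ (Or.inl hv0.ne')).continuousWithinAt).mul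
        (((continuousAt_id.sub continuousAt_const).rpow_const (Or.inl hvb.ne')).continuousWithinAt)
    exact (hcont.aemeasurable measurableSet_Ioi).aestronglyMeasurable
  have hgm : AEStronglyMeasurable g μ := by
    have hcont : ContinuousOn g (Ioi u) := by
      intro v hv
      have hv0 : (0:ℝ) < v := hu0.trans hv
      have hvb : (0:ℝ) < v - ub := by have : u < v := hv; linarith
      exact (((Real.continuousAt_rpow_const v _ (Or.inl hv0.ne')).continuousWithinAt).mul
        (((continuousAt_id.sub continuousAt_const).rpow_const
          (Or.inl hvb.ne')).continuousWithinAt)).mul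
        ((hφ.continuous_deriv le_rfl).abs.continuousOn v hv)
    exact (hcont.aemeasurable measurableSet_Ioi).aestronglyMeasurable
  -- nonnegativity a.e.
  have hfae : 0 ≤ᵐ[μ] f := by
    filter_upwards [ae_restrict_mem measurableSet_Ioi] with v hv
    have hv0 : (0:ℝ) < v := hu0.trans hv
    have hvb : (0:ℝ) < v - ub := by have : u < v := hv; linarith
    exact mul_nonneg (Real.rpow_nonneg hv0.le _) (Real.rpow_nonneg hvb.le _)
  have hgae : 0 ≤ᵐ[μ] g := by
    filter_upwards [ae_restrict_mem measurableSet_Ioi] with v hv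
    have hv0 : (0:ℝ) < v := hu0.trans hv
    have hvb : (0:ℝ) < v - ub := by have : u < v := hv; linarith
    exact mul_nonneg (mul_nonneg (Real.rpow_nonneg hv0.le _) (Real.rpow_nonneg hvb.le _))
      (abs_nonneg _)
  -- integrability of squares
  have hIf2 : Integrable (fun v => f v ^ 2) μ := by
    apply hWint.congr
    filter_upwards [ae_restrict_mem measurableSet_Ioi] with v hv
    exact (hf2eq v hv).symm
  have hWφ : IntegrableOn (fun v => v ^ (3*s) * (v - ub) ^ s * (deriv φ v) ^ 2) (Ioi u) volume :=
    hInt.mono_set (Ioi_subset_Ioi hu)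
  have hIg2 : Integrable (fun v => g v ^ 2) μ := by
    apply hWφ.congr
    filter_upwards [ae_restrict_mem measurableSet_Ioi] with v hv
    exact (hg2eq v hv).symm
  -- integral bounds
  have hIf2val : ∫ v, f v ^ 2 ∂μ ≤ 24 * u ^ (1 - 4*s) := by
    have : ∫ v, f v ^ 2 ∂μ = ∫ v in Ioi u, v ^ (-(3*s)) * (v - ub) ^ (-s) := by
      apply integral_congr_ae
      filter_upwards [ae_restrict_mem measurableSet_Ioi] with v hv
      exact hf2eq v hv
    rw [this]; exact hWval
  have hIg2val : ∫ v, g v ^ 2 ∂μ ≤ M2 := by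
    have heq : ∫ v, g v ^ 2 ∂μ = ∫ v in Ioi u, v ^ (3*s) * (v - ub) ^ s * (deriv φ v) ^ 2 := by
      apply integral_congr_ae
      filter_upwards [ae_restrict_mem measurableSet_Ioi] with v hv
      exact hg2eq v hv
    rw [heq, hM2]
    apply setIntegral_mono_set hInt
    · filter_upwards [ae_restrict_mem measurableSet_Ioi] with v hv
      have hv1 : ub < v := hv
      exact mul_nonneg (mul_nonneg (Real.rpow_nonneg (by linarith) _)
        (Real.rpow_nonneg (by linarith) _)) (sq_nonneg _)
    · exact HasSubset.Subset.eventuallyLE (Ioi_subset_Ioi hu)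
  -- integrability of deriv φ on Ioi u
  have hd : Integrable (deriv φ) μ := by
    apply Integrable.mono' (hIf2.add hIg2)
      ((hφ.continuous_deriv le_rfl).aestronglyMeasurable)
    filter_upwards [ae_restrict_mem measurableSet_Ioi, hfae, hgae] with v hv hf0 hg0
    simp only [Pi.add_apply, Pi.zero_apply] at hf0 hg0 ⊢
    rw [Real.norm_eq_abs, ← hfg v hv]
    nlinarith [sq_nonneg (f v - g v)]
  have hrep : φ u = - ∫ v in Ioi u, deriv φ v := myrep hφ ht hd
  -- Cauchy-Schwarz chain
  have hCS := mycs hfae hgae hfm hgm hIf2 hIg2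
  have habs : |∫ v, deriv φ v ∂μ| ≤ ∫ v, |deriv φ v| ∂μ := by
    have := norm_integral_le_integral_norm (μ := μ) (deriv φ)
    simpa [Real.norm_eq_abs] using this
  have habs2 : ∫ v, |deriv φ v| ∂μ = ∫ v, f v * g v ∂μ := by
    apply integral_congr_ae
    filter_upwards [ae_restrict_mem measurableSet_Ioi] with v hv
    exact (hfg v hv).symm
  have hM2nn : 0 ≤ M2 := by
    rw [hM2]
    apply setIntegral_nonneg measurableSet_Ioi
    intro v hv
    have hv1 : ub < v := hv
    exact mul_nonneg (mul_nonneg (Real.rpow_nonneg (by linarith) _)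
      (Real.rpow_nonneg (by linarith) _)) (sq_nonneg _)
  have hg2nn : 0 ≤ ∫ v, g v ^ 2 ∂μ := integral_nonneg (fun v => sq_nonneg _)
  have hupos : (0:ℝ) ≤ 24 * u ^ (1 - 4*s) := by
    positivity
  have hkey : φ u ^ 2 ≤ 24 * u ^ (1 - 4*s) * M2 := by
    calc φ u ^ 2 = |∫ v, deriv φ v ∂μ| ^ 2 := by rw [hrep, sq_abs]; ring
      _ ≤ (∫ v, |deriv φ v| ∂μ) ^ 2 := pow_le_pow_left₀ (abs_nonneg _) habs 2
      _ = (∫ v, f v * g v ∂μ) ^ 2 := by rw [habs2]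
      _ ≤ (∫ v, f v ^ 2 ∂μ) * ∫ v, g v ^ 2 ∂μ := hCS
      _ ≤ 24 * u ^ (1 - 4*s) * M2 := mul_le_mul hIf2val hIg2val hg2nn hupos
  have hcancel : u ^ (2/p) * u ^ (1 - 4*s) = 1 := by
    rw [← Real.rpow_add hu0, show 2/p + (1 - 4*s) = 0 by rw [hs]; field_simp; ring,
      Real.rpow_zero]
  have hup : (0:ℝ) < u ^ (2/p) := Real.rpow_pos_of_pos hu0 _
  calc u ^ (2/p) * φ u ^ 2 ≤ u ^ (2/p) * (24 * u ^ (1 - 4*s) * M2) :=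
        mul_le_mul_of_nonneg_left hkey hup.le
    _ = 24 * (u ^ (2/p) * u ^ (1 - 4*s)) * M2 := by ring
    _ = 24 * M2 := by rw [hcancel]; ring
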